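/- Gentle conjugation lemma. Let ρ_{AB} be a density operator on A⊗B, and let σ_B and Δ_B be positive semidefinite operators on B, each with trace at most 1, such that ρ_B = Tr_A ρ_{AB} satisfies ρ_B ≤ σ_B + Δ_B and σ_B + Δ_B is positive definite. Set G_B = σ_B^{1/2}·(σ_B + Δ_B)^{−1/2}. Then ‖ρ_{AB} − (1_A ⊗ G_B) ρ_{AB} (1_A ⊗ G_B†)‖₁ ≤ 2·√(2·Tr Δ_B). -/

import Mathlib

open Matrix MeasureTheory
open scoped Kronecker ENNReal ComplexOrder

noncomputable section

/-- Borel measurable structure on matrices. -/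
instance matrixMeasurableSpace (n : Type*) [Fintype n] : MeasurableSpace (Matrix n n ℂ) :=
  borel _

/-- A density operator: positive semidefinite with unit trace. -/
def IsDensity {n : Type*} [Fintype n] (ρ : Matrix n n ℂ) : Prop :=
  ρ.PosSemidef ∧ ρ.trace = 1

/-- A subnormalized state: positive semidefinite with trace at most one. -/
def IsSubState {n : Type*} [Fintype n] (ρ : Matrix n n ℂ) : Prop :=
  ρ.PosSemidef ∧ (ρ.trace).re ≤ 1

/-- The positive semidefinite square root of a positive semidefinite matrix
(the former Mathlib `Matrix.PosSemidef.sqrt`, spelled out with its old definition). -/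
def Matrix.PosSemidef.sqrt {n : Type*} [Fintype n] [DecidableEq n] {A : Matrix n n ℂ}
    (hA : A.PosSemidef) : Matrix n n ℂ :=
  (hA.1.eigenvectorUnitary : Matrix n n ℂ) * diagonal ((↑) ∘ (√·) ∘ hA.1.eigenvalues) *
    (star hA.1.eigenvectorUnitary : Matrix n n ℂ)

-- Positive semidefinite square root (junk value `0` on non-PSD input).
open scoped Classical in
def msqrt {n : Type*} [Fintype n] [DecidableEq n] (X : Matrix n n ℂ) : Matrix n n ℂ :=
  if h : X.PosSemidef then h.sqrt else 0

/-- Trace norm `‖X‖₁ = Tr √(XᴴX)`. -/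
def traceNorm {n : Type*} [Fintype n] [DecidableEq n] (X : Matrix n n ℂ) : ℝ :=
  ((Matrix.posSemidef_conjTranspose_mul_self X).sqrt).trace.re

/-- Fidelity `F(ρ,σ) = ‖√ρ√σ‖₁`. -/
def fid {n : Type*} [Fintype n] [DecidableEq n] (ρ σ : Matrix n n ℂ) : ℝ :=
  traceNorm (msqrt ρ * msqrt σ)

/-- Generalized fidelity of subnormalized states. -/
def gFid {n : Type*} [Fintype n] [DecidableEq n] (ρ σ : Matrix n n ℂ) : ℝ :=
  fid ρ σ + Real.sqrt ((1 - ρ.trace.re) * (1 - σ.trace.re))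

/-- Purified distance. -/
def pDist {n : Type*} [Fintype n] [DecidableEq n] (ρ σ : Matrix n n ℂ) : ℝ :=
  Real.sqrt (1 - (gFid ρ σ) ^ 2)

/-- The ε-ball of subnormalized states around `ρ` in purified distance. -/
def pBall {n : Type*} [Fintype n] [DecidableEq n] (ε : ℝ) (ρ : Matrix n n ℂ) :
    Set (Matrix n n ℂ) :=
  {τ | IsSubState τ ∧ pDist ρ τ ≤ ε}

/-- Partial trace over the second tensor factor. -/
def ptraceB {a b : Type*} [Fintype b] (ρ : Matrix (a × b) (a × b) ℂ) : Matrix a a ℂ :=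
  Matrix.of fun i j => ∑ k, ρ (i, k) (j, k)

/-- Partial trace over the first tensor factor. -/
def ptraceA {a b : Type*} [Fintype a] (ρ : Matrix (a × b) (a × b) ℂ) : Matrix b b ℂ :=
  Matrix.of fun i j => ∑ k, ρ (k, i) (k, j)

/-- Partial trace over the middle factor of `(S ⊗ E) ⊗ R`, giving a state on `S ⊗ R`. -/
def ptraceMid {s e r : Type*} [Fintype e]
    (ρ : Matrix ((s × e) × r) ((s × e) × r) ℂ) : Matrix (s × r) (s × r) ℂ :=
  Matrix.of fun p q => ∑ k, ρ ((p.1, k), p.2) ((q.1, k), q.2)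

/-- Conditional min-entropy `H_min(A|B)_ρ` (first factor conditioned on the second). -/
def Hmin {a b : Type*} [Fintype a] [Fintype b] [DecidableEq a]
    (ρ : Matrix (a × b) (a × b) ℂ) : ℝ :=
  sSup {l : ℝ | ∃ σ : Matrix b b ℂ, IsDensity σ ∧
    (((2 : ℝ) ^ (-l) • ((1 : Matrix a a ℂ) ⊗ₖ σ)) - ρ).PosSemidef}

/-- Smooth conditional min-entropy `H_min^ε(A|B)_ρ`. -/
def sHmin {a b : Type*} [Fintype a] [Fintype b] [DecidableEq a] [DecidableEq b]
    (ε : ℝ) (ρ : Matrix (a × b) (a × b) ℂ) : ℝ :=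
  sSup (Hmin '' pBall ε ρ)

/-- Non-conditional min-entropy. -/
def Hmin0 {a : Type*} [Fintype a] [DecidableEq a] (ρ : Matrix a a ℂ) : ℝ :=
  sSup {l : ℝ | (((2 : ℝ) ^ (-l) • (1 : Matrix a a ℂ)) - ρ).PosSemidef}

/-- Smooth non-conditional min-entropy. -/
def sHmin0 {a : Type*} [Fintype a] [DecidableEq a] (ε : ℝ) (ρ : Matrix a a ℂ) : ℝ :=
  sSup (Hmin0 '' pBall ε ρ)

/-- Conditional max-entropy `H_max(A|B)_ρ`. -/
def Hmax {a b : Type*} [Fintype a] [Fintype b] [DecidableEq a] [DecidableEq b]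
    (ρ : Matrix (a × b) (a × b) ℂ) : ℝ :=
  sSup {x : ℝ | ∃ σ : Matrix b b ℂ, IsDensity σ ∧
    x = Real.logb 2 ((fid ρ ((1 : Matrix a a ℂ) ⊗ₖ σ)) ^ 2)}

/-- Smooth conditional max-entropy `H_max^ε(A|B)_ρ`. -/
def sHmax {a b : Type*} [Fintype a] [Fintype b] [DecidableEq a] [DecidableEq b]
    (ε : ℝ) (ρ : Matrix (a × b) (a × b) ℂ) : ℝ :=
  sInf (Hmax '' pBall ε ρ)

/-- Non-conditional max-entropy `H_max(A)_ρ = log₂ F(ρ, 1)²`. -/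
def Hmax0 {a : Type*} [Fintype a] [DecidableEq a] (ρ : Matrix a a ℂ) : ℝ :=
  Real.logb 2 ((fid ρ (1 : Matrix a a ℂ)) ^ 2)

/-- Smooth non-conditional max-entropy. -/
def sHmax0 {a : Type*} [Fintype a] [DecidableEq a] (ε : ℝ) (ρ : Matrix a a ℂ) : ℝ :=
  sInf (Hmax0 '' pBall ε ρ)

/-- Alternative conditional min-entropy `Ĥ_min(A|B)_ρ` (conditioning on the marginal itself). -/
def HminAlt {a b : Type*} [Fintype a] [Fintype b] [DecidableEq a]
    (ρ : Matrix (a × b) (a × b) ℂ) : ℝ :=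
  sSup {l : ℝ | (((2 : ℝ) ^ (-l) • ((1 : Matrix a a ℂ) ⊗ₖ ptraceA ρ)) - ρ).PosSemidef}

/-- Alternative smooth conditional min-entropy `Ĥ_min^ε(A|B)_ρ`. -/
def sHminAlt {a b : Type*} [Fintype a] [Fintype b] [DecidableEq a] [DecidableEq b]
    (ε : ℝ) (ρ : Matrix (a × b) (a × b) ℂ) : ℝ :=
  sSup (HminAlt '' pBall ε ρ)

/-- Hypothesis-testing relative entropy
`2^{−D_H^ε(ρ‖σ)} = (1/ε)·inf{Tr(Qσ) : 0 ≤ Q ≤ 1, Tr(Qρ) ≥ ε}`. -/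
def DH {n : Type*} [Fintype n] [DecidableEq n] (ε : ℝ) (ρ σ : Matrix n n ℂ) : ℝ :=
  - Real.logb 2 ((1 / ε) *
    sInf {x : ℝ | ∃ Q : Matrix n n ℂ, Q.PosSemidef ∧ ((1 : Matrix n n ℂ) - Q).PosSemidef ∧
      ε ≤ ((Q * ρ).trace).re ∧ x = ((Q * σ).trace).re})

/-- Hypothesis-testing conditional entropy `H_h^ε(A|B)_ρ = −D_H^ε(ρ_{AB}‖1_A⊗ρ_B)`. -/
def Hh {a b : Type*} [Fintype a] [Fintype b] [DecidableEq a] [DecidableEq b]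
    (ε : ℝ) (ρ : Matrix (a × b) (a × b) ℂ) : ℝ :=
  - DH ε ρ ((1 : Matrix a a ℂ) ⊗ₖ ptraceA ρ)

/-- Non-conditional hypothesis-testing entropy `H_h^ε(A)_ρ = −D_H^ε(ρ‖1_A)`. -/
def Hh0 {a : Type*} [Fintype a] [DecidableEq a] (ε : ℝ) (ρ : Matrix a a ℂ) : ℝ :=
  - DH ε ρ (1 : Matrix a a ℂ)

/-- Choi matrix of a linear map on matrices. -/
def choi {a b : Type*} [Fintype a] [Fintype b] [DecidableEq a]
    (T : Matrix a a ℂ →ₗ[ℂ] Matrix b b ℂ) : Matrix (a × b) (a × b) ℂ :=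
  Matrix.of fun p q => (T (Matrix.single p.1 q.1 1)) p.2 q.2

/-- Complete positivity, via positivity of the Choi matrix. -/
def IsCP {a b : Type*} [Fintype a] [Fintype b] [DecidableEq a]
    (T : Matrix a a ℂ →ₗ[ℂ] Matrix b b ℂ) : Prop :=
  (choi T).PosSemidef

/-- Trace preservation. -/
def IsTP {a b : Type*} [Fintype a] [Fintype b]
    (T : Matrix a a ℂ →ₗ[ℂ] Matrix b b ℂ) : Prop :=
  ∀ X : Matrix a a ℂ, (T X).trace = X.trace

/-- The map `T ⊗ I_R` applied entrywise to a state on `A ⊗ R`. -/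
def tensId {a b r : Type*} (T : Matrix a a ℂ →ₗ[ℂ] Matrix b b ℂ)
    (ρ : Matrix (a × r) (a × r) ℂ) : Matrix (b × r) (b × r) ℂ :=
  Matrix.of fun p q => (T (Matrix.of fun i j => ρ (i, p.2) (j, q.2))) p.1 q.1

/-- A pure state: a rank-one projector `|v⟩⟨v|`. -/
def IsPure {n : Type*} (ρ : Matrix n n ℂ) : Prop :=
  ∃ v : n → ℂ, ρ = Matrix.vecMulVec v (star v)


namespace GentleAux

set_option linter.unusedSectionVars false

variable {n : Type*} [Fintype n] [DecidableEq n]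

theorem _root_.Matrix.PosSemidef.posSemidef_sqrt {A : Matrix n n ℂ} (hA : A.PosSemidef) :
    hA.sqrt.PosSemidef := by
  have hd : (0 : n → ℂ) ≤ ((↑) ∘ (√·) ∘ hA.1.eigenvalues) := fun i =>
    Complex.zero_le_real.mpr (Real.sqrt_nonneg _)
  have := (Matrix.PosSemidef.diagonal hd).mul_mul_conjTranspose_same
    (hA.1.eigenvectorUnitary : Matrix n n ℂ)
  rw [Matrix.PosSemidef.sqrt, Matrix.star_eq_conjTranspose]
  exact this

theorem _root_.Matrix.PosSemidef.sqrt_mul_self {A : Matrix n n ℂ} (hA : A.PosSemidef) :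
    hA.sqrt * hA.sqrt = A := by
  have hSU : (star hA.1.eigenvectorUnitary : Matrix n n ℂ) *
      (hA.1.eigenvectorUnitary : Matrix n n ℂ) = 1 := by simp
  have hD : diagonal (((↑) ∘ (√·) ∘ hA.1.eigenvalues) : n → ℂ) *
      diagonal (((↑) ∘ (√·) ∘ hA.1.eigenvalues) : n → ℂ)
        = diagonal (RCLike.ofReal ∘ hA.1.eigenvalues : n → ℂ) := by
    rw [diagonal_mul_diagonal]
    congr 1
    funext i
    simp only [Function.comp]
    rw [← Complex.ofReal_mul, Real.mul_self_sqrt (hA.eigenvalues_nonneg i)]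
    rfl
  conv_rhs => rw [hA.1.spectral_theorem]
  rw [Unitary.conjStarAlgAut_apply, Matrix.PosSemidef.sqrt, ← hD]
  calc _ = (hA.1.eigenvectorUnitary : Matrix n n ℂ) * diagonal (((↑) ∘ (√·) ∘ hA.1.eigenvalues) : n → ℂ) *
        ((star hA.1.eigenvectorUnitary : Matrix n n ℂ) * (hA.1.eigenvectorUnitary : Matrix n n ℂ)) *
        diagonal (((↑) ∘ (√·) ∘ hA.1.eigenvalues) : n → ℂ) *
        (star hA.1.eigenvectorUnitary : Matrix n n ℂ) := by simp only [Matrix.mul_assoc]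
    _ = _ := by rw [hSU, Matrix.mul_one]; simp only [Matrix.mul_assoc]

lemma cs_sum {ι : Type*} [Fintype ι] (u v : ι → ℂ) :
    (∑ i, (starRingEnd ℂ) (u i) * v i).re ≤
      Real.sqrt (∑ i, Complex.normSq (u i)) * Real.sqrt (∑ i, Complex.normSq (v i)) := by
  have h1 : (∑ i, (starRingEnd ℂ) (u i) * v i).re ≤ ∑ i, ‖u i‖ * ‖v i‖ := by
    rw [Complex.re_sum]
    refine Finset.sum_le_sum fun i _ => ?_
    calc ((starRingEnd ℂ) (u i) * v i).re ≤ ‖(starRingEnd ℂ) (u i) * v i‖ :=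
          Complex.re_le_norm _
      _ = ‖u i‖ * ‖v i‖ := by
          rw [norm_mul, Complex.norm_conj]
  refine h1.trans ?_
  have h2 : (∑ i, ‖u i‖ * ‖v i‖) ^ 2 ≤
      (∑ i, ‖u i‖ ^ 2) * (∑ i, ‖v i‖ ^ 2) :=
    Finset.sum_mul_sq_le_sq_mul_sq _ _ _
  have h3 : 0 ≤ ∑ i, ‖u i‖ * ‖v i‖ :=
    Finset.sum_nonneg fun i _ => mul_nonneg (norm_nonneg _) (norm_nonneg _)
  have := Real.sqrt_le_sqrt h2
  rw [Real.sqrt_sq h3, Real.sqrt_mul (Finset.sum_nonneg fun i _ => sq_nonneg _)] at this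
  simpa only [Complex.sq_norm] using this

lemma dot_star_self_re (v : n → ℂ) : (star v ⬝ᵥ v).re = ∑ i, Complex.normSq (v i) := by
  simp only [dotProduct, Pi.star_apply, Complex.re_sum]
  refine Finset.sum_congr rfl fun i _ => ?_
  simp [Complex.normSq_apply, Complex.mul_re]

lemma dot_star_self_im (v : n → ℂ) : (star v ⬝ᵥ v).im = 0 := by
  simp only [dotProduct, Pi.star_apply, Complex.im_sum]
  refine Finset.sum_eq_zero fun i _ => ?_
  simp [Complex.mul_im, Complex.star_def]
  ring

lemma dot_star_self_re_nonneg (v : n → ℂ) : 0 ≤ (star v ⬝ᵥ v).re := by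
  rw [dot_star_self_re]
  exact Finset.sum_nonneg fun i _ => Complex.normSq_nonneg _

/-- "norm" of a vector -/
noncomputable def nrm (v : n → ℂ) : ℝ := Real.sqrt ((star v ⬝ᵥ v).re)

lemma nrm_nonneg (v : n → ℂ) : 0 ≤ nrm v := Real.sqrt_nonneg _

lemma nrm_sq (v : n → ℂ) : nrm v ^ 2 = (star v ⬝ᵥ v).re :=
  Real.sq_sqrt (dot_star_self_re_nonneg v)

lemma re_dot_le_nrm (u v : n → ℂ) : (star u ⬝ᵥ v).re ≤ nrm u * nrm v := by
  have := cs_sum u v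
  rw [← dot_star_self_re, ← dot_star_self_re] at this
  simpa only [dotProduct, Pi.star_apply, Complex.star_def, nrm] using this

lemma nrm_pos_of_ne_zero {v : n → ℂ} (hv : v ≠ 0) : 0 < (star v ⬝ᵥ v).re := by
  rw [dot_star_self_re]
  obtain ⟨i, hi⟩ : ∃ i, v i ≠ 0 := by
    by_contra h
    push_neg at h
    exact hv (funext h)
  exact Finset.sum_pos' (fun j _ => Complex.normSq_nonneg _)
    ⟨i, Finset.mem_univ i, by simpa using Complex.normSq_pos.mpr hi⟩

lemma dot_conj_mul (A : Matrix n n ℂ) (v : n → ℂ) :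
    star v ⬝ᵥ (Aᴴ * A) *ᵥ v = star (A *ᵥ v) ⬝ᵥ (A *ᵥ v) := by
  rw [star_mulVec, ← dotProduct_mulVec, mulVec_mulVec]

lemma psd_re_dot {M : Matrix n n ℂ} (hM : M.PosSemidef) (v : n → ℂ) :
    0 ≤ (star v ⬝ᵥ M *ᵥ v).re := by
  have := hM.dotProduct_mulVec_nonneg v
  rw [Complex.le_def] at this
  simpa using this.1

lemma le_dot_of_psd_sub {A B : Matrix n n ℂ} (h : (B - A).PosSemidef) (v : n → ℂ) :
    (star v ⬝ᵥ A *ᵥ v).re ≤ (star v ⬝ᵥ B *ᵥ v).re := by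
  have := psd_re_dot h v
  rw [sub_mulVec, dotProduct_sub, Complex.sub_re] at this
  linarith

lemma contract_mulVec {A : Matrix n n ℂ} (hA : ((1 : Matrix n n ℂ) - Aᴴ * A).PosSemidef)
    (v : n → ℂ) : nrm (A *ᵥ v) ≤ nrm v := by
  have h := le_dot_of_psd_sub hA v
  rw [dot_conj_mul] at h
  simp only [one_mulVec] at h
  exact Real.sqrt_le_sqrt h

lemma contract_conjTranspose {A : Matrix n n ℂ}
    (hA : ((1 : Matrix n n ℂ) - Aᴴ * A).PosSemidef) :
    ((1 : Matrix n n ℂ) - A * Aᴴ).PosSemidef := by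
  refine Matrix.PosSemidef.of_dotProduct_mulVec_nonneg ?_ ?_
  · -- Hermitian
    unfold Matrix.IsHermitian
    simp [conjTranspose_sub, conjTranspose_mul]
  · intro v
    set w : n → ℂ := Aᴴ *ᵥ v with hw
    have hval : star v ⬝ᵥ ((1 : Matrix n n ℂ) - A * Aᴴ) *ᵥ v
        = star v ⬝ᵥ v - star w ⬝ᵥ w := by
      rw [sub_mulVec, dotProduct_sub, one_mulVec]
      congr 1
      have : A * Aᴴ = (Aᴴ)ᴴ * Aᴴ := by rw [conjTranspose_conjTranspose]
      rw [this, dot_conj_mul]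
    rw [hval]
    -- show 0 ≤ star v ⬝ᵥ v - star w ⬝ᵥ w
    have him : (star v ⬝ᵥ v - star w ⬝ᵥ w).im = 0 := by
      rw [Complex.sub_im, dot_star_self_im, dot_star_self_im]; ring
    have hre : (star w ⬝ᵥ w).re ≤ (star v ⬝ᵥ v).re := by
      -- ‖w‖² = re(star v ⬝ᵥ A *ᵥ w) ≤ nrm v * nrm (A*ᵥw) ≤ nrm v * nrm w
      have hkey : (star w ⬝ᵥ w) = star v ⬝ᵥ (A *ᵥ w) := by
        rw [hw, star_mulVec, conjTranspose_conjTranspose, ← dotProduct_mulVec]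
      have h1 : (star w ⬝ᵥ w).re ≤ nrm v * nrm (A *ᵥ w) := by
        rw [hkey]; exact re_dot_le_nrm v (A *ᵥ w)
      have h2 : nrm (A *ᵥ w) ≤ nrm w := contract_mulVec hA w
      have h3 : (star w ⬝ᵥ w).re ≤ nrm v * nrm w :=
        h1.trans (mul_le_mul_of_nonneg_left h2 (nrm_nonneg v))
      have h4 : nrm w ^ 2 ≤ nrm v * nrm w := by rw [nrm_sq]; exact h3
      have h5 : nrm w ≤ nrm v := by
        rcases eq_or_lt_of_le (nrm_nonneg w) with h | h
        · rw [← h]; exact nrm_nonneg v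
        · nlinarith
      calc (star w ⬝ᵥ w).re = nrm w ^ 2 := (nrm_sq w).symm
        _ ≤ nrm v ^ 2 := by nlinarith [nrm_nonneg w, nrm_nonneg v]
        _ = (star v ⬝ᵥ v).re := nrm_sq v
    rw [Complex.le_def]
    constructor
    · simpa [Complex.sub_re] using by linarith
    · simpa using him.symm

lemma conj_sub_psd {A B : Matrix n n ℂ} (h : (B - A).PosSemidef) (C : Matrix n n ℂ) :
    (Cᴴ * B * C - Cᴴ * A * C).PosSemidef := by
  have := h.conjTranspose_mul_mul_same C
  have heq : Cᴴ * (B - A) * C = Cᴴ * B * C - Cᴴ * A * C := by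
    rw [Matrix.mul_sub, Matrix.sub_mul]
  rwa [heq] at this

lemma diag_re_nonneg {M : Matrix n n ℂ} (hM : M.PosSemidef) (i : n) : 0 ≤ (M i i).re := by
  have := psd_re_dot hM (Pi.single i 1)
  have hval : star (Pi.single i (1:ℂ)) ⬝ᵥ M *ᵥ Pi.single i 1 = M i i := by
    simp [dotProduct, Matrix.mulVec, Pi.single_apply, Finset.sum_ite_eq',
      apply_ite, Finset.mul_sum]
  rwa [hval] at this

lemma trace_re_nonneg {M : Matrix n n ℂ} (hM : M.PosSemidef) : 0 ≤ M.trace.re := by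
  rw [Matrix.trace, Complex.re_sum]
  exact Finset.sum_nonneg fun i _ => diag_re_nonneg hM i

lemma trace_mul_psd_re_nonneg {A B : Matrix n n ℂ} (hA : A.PosSemidef) (hB : B.PosSemidef) :
    0 ≤ ((A * B).trace).re := by
  have hS := hA.posSemidef_sqrt
  have hSh : (hA.sqrt)ᴴ = hA.sqrt := hS.1
  have : (A * B).trace = ((hA.sqrt)ᴴ * B * hA.sqrt).trace := by
    rw [hSh]
    conv_lhs => rw [← hA.sqrt_mul_self]
    rw [Matrix.mul_assoc, Matrix.trace_mul_comm, Matrix.mul_assoc]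
  rw [this]
  exact trace_re_nonneg (hB.conjTranspose_mul_mul_same _)

lemma trace_mul_mono {A B M : Matrix n n ℂ} (h : (B - A).PosSemidef) (hM : M.PosSemidef) :
    ((A * M).trace).re ≤ ((B * M).trace).re := by
  have := trace_mul_psd_re_nonneg h hM
  rw [Matrix.sub_mul, Matrix.trace_sub, Complex.sub_re] at this
  linarith

/-- squared Frobenius norm -/
noncomputable def l2sq (X : Matrix n n ℂ) : ℝ := ((Xᴴ * X).trace).re

lemma trace_conj_mul (A B : Matrix n n ℂ) :
    (Aᴴ * B).trace = ∑ p : n × n, (starRingEnd ℂ) (A p.1 p.2) * B p.1 p.2 := by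
  simp only [Matrix.trace, Matrix.diag, Matrix.mul_apply, Matrix.conjTranspose_apply,
    Fintype.sum_prod_type, Complex.star_def]
  exact Finset.sum_comm

lemma l2sq_eq_sum (X : Matrix n n ℂ) : l2sq X = ∑ p : n × n, Complex.normSq (X p.1 p.2) := by
  rw [l2sq, trace_conj_mul, Complex.re_sum]
  refine Finset.sum_congr rfl fun p _ => ?_
  simp [Complex.normSq_apply, Complex.mul_re]

lemma l2sq_nonneg (X : Matrix n n ℂ) : 0 ≤ l2sq X := by
  rw [l2sq_eq_sum]; exact Finset.sum_nonneg fun p _ => Complex.normSq_nonneg _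

lemma frob_cs (A B : Matrix n n ℂ) :
    (((Aᴴ * B).trace)).re ≤ Real.sqrt (l2sq A) * Real.sqrt (l2sq B) := by
  rw [trace_conj_mul, l2sq_eq_sum, l2sq_eq_sum]
  exact cs_sum (fun p : n × n => A p.1 p.2) (fun p : n × n => B p.1 p.2)

lemma contract_trace_le {M Q : Matrix n n ℂ} (hM : ((1 : Matrix n n ℂ) - Mᴴ * M).PosSemidef)
    (hQ : Q.PosSemidef) : ((M * Q).trace).re ≤ Q.trace.re := by
  set S := hQ.sqrt with hSdef
  have hSh : Sᴴ = S := hQ.posSemidef_sqrt.1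
  have hSS : S * S = Q := hQ.sqrt_mul_self
  have htr : (M * Q).trace = (S * M * S).trace := by
    conv_lhs => rw [← hSS, ← Matrix.mul_assoc]
    rw [Matrix.trace_mul_comm, Matrix.mul_assoc]
  have hconj : ∀ k i : n, (starRingEnd ℂ) (S k i) = S i k := by
    intro k i
    have := congrFun (congrFun hSh i) k
    simpa [Matrix.conjTranspose_apply, Complex.star_def] using this
  rw [htr, Matrix.trace, Matrix.trace, Complex.re_sum, Complex.re_sum]
  refine Finset.sum_le_sum fun i _ => ?_
  set c : n → ℂ := fun j => S j i with hc
  have hentry : (S * M * S).diag i = star c ⬝ᵥ (M *ᵥ c) := by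
    simp only [Matrix.diag, Matrix.mul_apply, dotProduct, Matrix.mulVec, Pi.star_apply, hc,
      Finset.sum_mul, Finset.mul_sum]
    rw [Finset.sum_comm]
    refine Finset.sum_congr rfl fun j _ => Finset.sum_congr rfl fun k _ => ?_
    rw [Complex.star_def, hconj]
    ring
  have hcol : (Q.diag i) = star c ⬝ᵥ c := by
    simp only [Matrix.diag, ← hSS, Matrix.mul_apply, dotProduct, Pi.star_apply, hc]
    refine Finset.sum_congr rfl fun j _ => ?_
    rw [Complex.star_def, hconj]
  rw [hentry, hcol]
  calc (star c ⬝ᵥ M *ᵥ c).re ≤ nrm c * nrm (M *ᵥ c) := re_dot_le_nrm _ _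
    _ ≤ nrm c * nrm c := mul_le_mul_of_nonneg_left (contract_mulVec hM c) (nrm_nonneg c)
    _ = (star c ⬝ᵥ c).re := by rw [← sq]; exact nrm_sq c


lemma psd_smul {M : Matrix n n ℂ} (hM : M.PosSemidef) {c : ℝ} (hc : 0 ≤ c) :
    ((c : ℂ) • M).PosSemidef := by
  refine Matrix.PosSemidef.of_dotProduct_mulVec_nonneg ?_ ?_
  · unfold Matrix.IsHermitian
    rw [Matrix.conjTranspose_smul, hM.1]
    congr 1
    simp [Complex.star_def, Complex.conj_ofReal]
  · intro v
    rw [smul_mulVec, dotProduct_smul, smul_eq_mul]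
    exact mul_nonneg (Complex.zero_le_real.mpr hc) (hM.dotProduct_mulVec_nonneg v)

lemma posdef_smul_one {ε : ℝ} (hε : 0 < ε) : ((ε : ℂ) • (1 : Matrix n n ℂ)).PosDef := by
  rw [Matrix.smul_one_eq_diagonal]
  exact Matrix.posDef_diagonal_iff.mpr fun i => Complex.zero_lt_real.mpr hε

lemma traceNorm_eq (Z : Matrix n n ℂ) :
    traceNorm Z = ((Matrix.posSemidef_conjTranspose_mul_self Z).sqrt).trace.re := rfl

lemma polar (Z : Matrix n n ℂ) {ε : ℝ} (hε : 0 < ε) :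
    ∃ W S : Matrix n n ℂ, ((1 : Matrix n n ℂ) - Wᴴ * W).PosSemidef ∧ S.PosSemidef ∧
      W * S = Z ∧ S.trace.re = traceNorm Z + ε * (Fintype.card n) ∧
      traceNorm Z ≤ ((Wᴴ * Z).trace).re + ε * (Fintype.card n) := by
  have hZZ := Matrix.posSemidef_conjTranspose_mul_self Z
  set P := hZZ.sqrt with hPdef
  have hPpsd : P.PosSemidef := hZZ.posSemidef_sqrt
  have hPP : P * P = Zᴴ * Z := hZZ.sqrt_mul_self
  set S : Matrix n n ℂ := P + (ε : ℂ) • 1 with hSdef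
  have hone : ((ε : ℂ) • (1 : Matrix n n ℂ)).PosDef := posdef_smul_one hε
  have hSpd : S.PosDef := Matrix.PosDef.posSemidef_add hPpsd hone
  have hSh : Sᴴ = S := hSpd.isHermitian
  have hdet : IsUnit S.det := isUnit_iff_ne_zero.mpr hSpd.det_pos.ne'
  have hinv1 : S⁻¹ * S = 1 := Matrix.nonsing_inv_mul S hdet
  have hinv2 : S * S⁻¹ = 1 := Matrix.mul_nonsing_inv S hdet
  have hSinvh : (S⁻¹)ᴴ = S⁻¹ := by rw [Matrix.conjTranspose_nonsing_inv, hSh]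
  set W : Matrix n n ℂ := Z * S⁻¹ with hWdef
  have hWS : W * S = Z := by rw [hWdef, Matrix.mul_assoc, hinv1, Matrix.mul_one]
  have hWW : Wᴴ * W = S⁻¹ * (P * P) * S⁻¹ := by
    rw [hWdef, Matrix.conjTranspose_mul, hSinvh, hPP]
    simp only [Matrix.mul_assoc]
  have hSSinv : S⁻¹ * (S * S) * S⁻¹ = 1 := by
    rw [← Matrix.mul_assoc, hinv1, Matrix.one_mul, hinv2]
  have hexpand : S * S = P * P + ((2 * ε : ℝ) : ℂ) • P + ((ε ^ 2 : ℝ) : ℂ) • (1 : Matrix n n ℂ) := by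
    rw [hSdef]
    rw [Matrix.add_mul, Matrix.mul_add, Matrix.mul_add, Matrix.smul_mul, Matrix.mul_smul,
      Matrix.mul_smul, Matrix.one_mul, Matrix.mul_one]
    simp only [Matrix.mul_one, smul_smul]
    push_cast
    module
  have hgap : (S * S - P * P).PosSemidef := by
    have h1 : S * S - P * P
        = ((2 * ε : ℝ) : ℂ) • P + ((ε ^ 2 : ℝ) : ℂ) • (1 : Matrix n n ℂ) := by
      rw [hexpand]; abel
    rw [h1]
    exact (psd_smul hPpsd (by positivity)).add (psd_smul Matrix.PosSemidef.one (sq_nonneg ε))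
  have hcontr : ((1 : Matrix n n ℂ) - Wᴴ * W).PosSemidef := by
    have h2 : (1 : Matrix n n ℂ) - Wᴴ * W = (S⁻¹)ᴴ * (S * S - P * P) * S⁻¹ := by
      rw [hSinvh, Matrix.mul_sub, Matrix.sub_mul, hSSinv, hWW]
    rw [h2]
    exact hgap.conjTranspose_mul_mul_same _
  have htrS : S.trace.re = traceNorm Z + ε * (Fintype.card n) := by
    rw [hSdef, Matrix.trace_add, Matrix.trace_smul, Matrix.trace_one]
    simp [Complex.add_re, traceNorm_eq, smul_eq_mul, Complex.mul_re]
    rfl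
  have hid : S * (P - (ε : ℂ) • 1 + ((ε ^ 2 : ℝ) : ℂ) • S⁻¹) = P * P := by
    rw [Matrix.mul_add, Matrix.mul_sub, Matrix.mul_smul, Matrix.mul_smul, hinv2, Matrix.mul_one]
    rw [hSdef, Matrix.add_mul, Matrix.smul_mul, Matrix.one_mul]
    push_cast
    module
  have hWZ : Wᴴ * Z = P - (ε : ℂ) • 1 + ((ε ^ 2 : ℝ) : ℂ) • S⁻¹ := by
    have h3 : Wᴴ * Z = S⁻¹ * (P * P) := by
      rw [hWdef, Matrix.conjTranspose_mul, hSinvh, Matrix.mul_assoc, hPP]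
    rw [h3, ← hid, ← Matrix.mul_assoc, hinv1, Matrix.one_mul]
  have hSinvtr : 0 ≤ (S⁻¹).trace.re := trace_re_nonneg hSpd.inv.posSemidef
  have hfinal : traceNorm Z ≤ ((Wᴴ * Z).trace).re + ε * (Fintype.card n) := by
    rw [hWZ, Matrix.trace_add, Matrix.trace_sub, Matrix.trace_smul, Matrix.trace_smul,
      Matrix.trace_one]
    rw [traceNorm_eq]
    simp only [Complex.add_re, Complex.sub_re, smul_eq_mul, Complex.mul_re,
      Complex.ofReal_re, Complex.ofReal_im, Complex.natCast_re, Complex.natCast_im]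
    nlinarith [sq_nonneg ε]
  exact ⟨W, S, hcontr, hSpd.posSemidef, hWS, htrS, hfinal⟩


lemma contract_mul {W V : Matrix n n ℂ} (hW : ((1 : Matrix n n ℂ) - Wᴴ * W).PosSemidef)
    (hV : ((1 : Matrix n n ℂ) - Vᴴ * V).PosSemidef) :
    ((1 : Matrix n n ℂ) - (Wᴴ * V)ᴴ * (Wᴴ * V)).PosSemidef := by
  have hWc := contract_conjTranspose hW
  have h1 := hWc.conjTranspose_mul_mul_same (B := V)
  have hsum := h1.add hV
  have heq : Vᴴ * ((1 : Matrix n n ℂ) - W * Wᴴ) * V + ((1 : Matrix n n ℂ) - Vᴴ * V)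
      = (1 : Matrix n n ℂ) - (Wᴴ * V)ᴴ * (Wᴴ * V) := by
    rw [Matrix.conjTranspose_mul, Matrix.conjTranspose_conjTranspose]
    rw [Matrix.mul_sub, Matrix.sub_mul, Matrix.mul_one]
    simp only [Matrix.mul_assoc]
    abel
  rwa [heq] at hsum

lemma dual_le {W : Matrix n n ℂ} (hW : ((1 : Matrix n n ℂ) - Wᴴ * W).PosSemidef)
    (Z : Matrix n n ℂ) : ((Wᴴ * Z).trace).re ≤ traceNorm Z := by
  refine le_of_forall_pos_le_add fun δ hδ => ?_
  set c : ℝ := (Fintype.card n : ℝ) with hc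
  have hc0 : 0 ≤ c := Nat.cast_nonneg _
  have hε : 0 < δ / (c + 1) := by positivity
  obtain ⟨V, S, hV, hSpsd, hVS, hStr, -⟩ := polar Z hε
  have step1 : Wᴴ * Z = (Wᴴ * V) * S := by rw [← hVS, Matrix.mul_assoc]
  have step2 : (((Wᴴ * V) * S).trace).re ≤ S.trace.re :=
    contract_trace_le (contract_mul hW hV) hSpsd
  have step3 : S.trace.re ≤ traceNorm Z + δ := by
    rw [hStr, ← hc]
    have : δ / (c + 1) * c ≤ δ := by
      rw [div_mul_eq_mul_div, div_le_iff₀ (by linarith)]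
      nlinarith
    linarith
  rw [step1]
  exact step2.trans step3

lemma traceNorm_add_le (Z₁ Z₂ : Matrix n n ℂ) :
    traceNorm (Z₁ + Z₂) ≤ traceNorm Z₁ + traceNorm Z₂ := by
  refine le_of_forall_pos_le_add fun δ hδ => ?_
  set c : ℝ := (Fintype.card n : ℝ) with hc
  have hc0 : 0 ≤ c := Nat.cast_nonneg _
  have hε : 0 < δ / (c + 1) := by positivity
  obtain ⟨W, S, hW, -, -, -, hbd⟩ := polar (Z₁ + Z₂) hε
  have hsplit : ((Wᴴ * (Z₁ + Z₂)).trace).re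
      = ((Wᴴ * Z₁).trace).re + ((Wᴴ * Z₂).trace).re := by
    rw [Matrix.mul_add, Matrix.trace_add, Complex.add_re]
  have h1 := dual_le hW Z₁
  have h2 := dual_le hW Z₂
  have h3 : δ / (c + 1) * c ≤ δ := by
    rw [div_mul_eq_mul_div, div_le_iff₀ (by linarith)]
    nlinarith
  rw [hsplit] at hbd
  linarith

lemma traceNorm_mul_le (X Y : Matrix n n ℂ) :
    traceNorm (X * Y) ≤ Real.sqrt (l2sq X) * Real.sqrt (l2sq Y) := by
  refine le_of_forall_pos_le_add fun δ hδ => ?_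
  set c : ℝ := (Fintype.card n : ℝ) with hc
  have hc0 : 0 ≤ c := Nat.cast_nonneg _
  have hε : 0 < δ / (c + 1) := by positivity
  obtain ⟨W, S, hW, -, -, -, hbd⟩ := polar (X * Y) hε
  have step1 : Wᴴ * (X * Y) = (Xᴴ * W)ᴴ * Y := by
    rw [Matrix.conjTranspose_mul, Matrix.conjTranspose_conjTranspose, Matrix.mul_assoc]
  have step2 : (((Xᴴ * W)ᴴ * Y).trace).re ≤ Real.sqrt (l2sq (Xᴴ * W)) * Real.sqrt (l2sq Y) :=
    frob_cs _ _
  have step3 : l2sq (Xᴴ * W) ≤ l2sq X := by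
    have e1 : (Xᴴ * W)ᴴ * (Xᴴ * W) = Wᴴ * (X * Xᴴ) * W := by
      rw [Matrix.conjTranspose_mul, Matrix.conjTranspose_conjTranspose]
      simp only [Matrix.mul_assoc]
    have e2 : ((Xᴴ * W)ᴴ * (Xᴴ * W)).trace = ((X * Xᴴ) * (W * Wᴴ)).trace := by
      rw [e1, Matrix.trace_mul_cycle, Matrix.mul_assoc, ← Matrix.mul_assoc,
        Matrix.trace_mul_comm]
    have e3 : (((X * Xᴴ) * (W * Wᴴ)).trace).re ≤ (((X * Xᴴ) * 1).trace).re := by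
      have h0 := trace_mul_psd_re_nonneg (Matrix.posSemidef_self_mul_conjTranspose X)
        (contract_conjTranspose hW)
      rw [Matrix.mul_sub, Matrix.trace_sub, Complex.sub_re] at h0
      linarith
    have e4 : (((X * Xᴴ) * 1).trace).re = l2sq X := by
      rw [Matrix.mul_one, Matrix.trace_mul_comm]
      rfl
    rw [l2sq, e2]
    rw [e4] at e3
    exact e3
  have step4 : Real.sqrt (l2sq (Xᴴ * W)) ≤ Real.sqrt (l2sq X) := Real.sqrt_le_sqrt step3
  have h3 : δ / (c + 1) * c ≤ δ := by
    rw [div_mul_eq_mul_div, div_le_iff₀ (by linarith)]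
    nlinarith
  rw [step1] at hbd
  have : ((( Xᴴ * W)ᴴ * Y).trace).re ≤ Real.sqrt (l2sq X) * Real.sqrt (l2sq Y) :=
    step2.trans (mul_le_mul_of_nonneg_right step4 (Real.sqrt_nonneg _))
  linarith


lemma star_dot_conj (u v : n → ℂ) : star u ⬝ᵥ v = (starRingEnd ℂ) (star v ⬝ᵥ u) := by
  simp only [dotProduct, Pi.star_apply, map_sum, _root_.map_mul, Complex.star_def,
    Complex.conj_conj]
  exact Finset.sum_congr rfl fun i _ => mul_comm _ _

lemma sqrt_mono {A B : Matrix n n ℂ} (hA : A.PosSemidef) (hB : B.PosSemidef)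
    (hAB : (B - A).PosSemidef) : (hB.sqrt - hA.sqrt).PosSemidef := by
  set Q := hA.sqrt with hQdef
  set R := hB.sqrt with hRdef
  have hQpsd : Q.PosSemidef := hA.posSemidef_sqrt
  have hRpsd : R.PosSemidef := hB.posSemidef_sqrt
  have hQQ : Q * Q = A := hA.sqrt_mul_self
  have hRR : R * R = B := hB.sqrt_mul_self
  have hherm : (R - Q).IsHermitian := hRpsd.1.sub hQpsd.1
  by_contra hcon
  have hneg : ∃ i, hherm.eigenvalues i < 0 := by
    by_contra h
    push_neg at h
    exact hcon (hherm.posSemidef_iff_eigenvalues_nonneg.mpr h)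
  obtain ⟨i, hi⟩ := hneg
  set t : ℝ := hherm.eigenvalues i with ht
  set v : n → ℂ := ⇑(hherm.eigenvectorBasis i) with hv
  have hvec : (R - Q) *ᵥ v = t • v := hherm.mulVec_eigenvectorBasis i
  have hvne : v ≠ 0 := by
    intro h
    have := hherm.eigenvectorBasis.orthonormal.ne_zero i
    apply this
    ext j
    exact congrFun h j
  have hQv : Q *ᵥ v = R *ᵥ v - t • v := by
    rw [← hvec, sub_mulVec]
    abel
  -- dot product computations
  have hdotA : star v ⬝ᵥ A *ᵥ v = star (Q *ᵥ v) ⬝ᵥ (Q *ᵥ v) := by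
    rw [← hQQ]
    conv_lhs => rw [show Q * Q = Qᴴ * Q by rw [hQpsd.1]]
    exact dot_conj_mul Q v
  have hdotB : star v ⬝ᵥ B *ᵥ v = star (R *ᵥ v) ⬝ᵥ (R *ᵥ v) := by
    rw [← hRR]
    conv_lhs => rw [show R * R = Rᴴ * R by rw [hRpsd.1]]
    exact dot_conj_mul R v
  set w : n → ℂ := R *ᵥ v with hw
  have hexp : star (Q *ᵥ v) ⬝ᵥ (Q *ᵥ v)
      = star w ⬝ᵥ w - (t : ℂ) * (star w ⬝ᵥ v) - (t : ℂ) * (star v ⬝ᵥ w)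
        + (t : ℂ) * (t : ℂ) * (star v ⬝ᵥ v) := by
    rw [hQv]
    have hstar : star (w - t • v) = star w - (t : ℂ) • star v := by
      ext j
      simp [Complex.star_def, Complex.conj_ofReal]
    rw [hstar]
    simp only [dotProduct_sub, sub_dotProduct, smul_dotProduct, dotProduct_smul,
      Complex.real_smul, smul_eq_mul]
    ring
  -- real parts
  have hwv : (star w ⬝ᵥ v).re = (star v ⬝ᵥ w).re := by
    rw [star_dot_conj w v]
    exact Complex.conj_re _
  have hRnn : 0 ≤ (star v ⬝ᵥ w).re := by
    rw [hw]
    exact psd_re_dot hRpsd v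
  have hvpos : 0 < (star v ⬝ᵥ v).re := nrm_pos_of_ne_zero hvne
  have hle := le_dot_of_psd_sub hAB v
  rw [hdotA, hdotB, hexp] at hle
  simp only [Complex.add_re, Complex.sub_re, Complex.mul_re, Complex.ofReal_re,
    Complex.ofReal_im, dot_star_self_im] at hle
  simp only [zero_mul, sub_zero, mul_zero, zero_sub, neg_zero] at hle
  rw [hwv] at hle
  have h1 : 0 < t * t * (star v ⬝ᵥ v).re := mul_pos (mul_pos_of_neg_of_neg hi hi) hvpos
  have h2 : 0 ≤ (-t) * (star v ⬝ᵥ w).re := mul_nonneg (by linarith) hRnn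
  nlinarith [hle, h1, h2]


lemma msqrt_eq {X : Matrix n n ℂ} (h : X.PosSemidef) : msqrt X = h.sqrt := dif_pos h

section Kron

open scoped Kronecker

variable {a b : Type*} [Fintype a] [Fintype b] [DecidableEq a] [DecidableEq b]

lemma kron_conjT (M : Matrix a a ℂ) (N : Matrix b b ℂ) : (M ⊗ₖ N)ᴴ = Mᴴ ⊗ₖ Nᴴ := by
  ext ⟨i, k⟩ ⟨j, l⟩
  simp only [Matrix.conjTranspose_apply, Matrix.kroneckerMap_apply, star_mul',
    Complex.star_def]

lemma one_kron_sub (M N : Matrix b b ℂ) :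
    (1 : Matrix a a ℂ) ⊗ₖ (M - N) = (1 : Matrix a a ℂ) ⊗ₖ M - (1 : Matrix a a ℂ) ⊗ₖ N := by
  ext ⟨i, k⟩ ⟨j, l⟩
  simp only [Matrix.kroneckerMap_apply, Matrix.sub_apply, mul_sub]

lemma kron_one_psd {M : Matrix b b ℂ} (hM : M.PosSemidef) :
    ((1 : Matrix a a ℂ) ⊗ₖ M).PosSemidef := by
  have h : ((1 : Matrix a a ℂ) ⊗ₖ hM.sqrt)ᴴ * ((1 : Matrix a a ℂ) ⊗ₖ hM.sqrt)
      = (1 : Matrix a a ℂ) ⊗ₖ M := by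
    rw [kron_conjT, Matrix.conjTranspose_one, ← Matrix.mul_kronecker_mul, Matrix.one_mul,
      hM.posSemidef_sqrt.1, hM.sqrt_mul_self]
  rw [← h]
  exact Matrix.posSemidef_conjTranspose_mul_self _

lemma trace_ptraceA (ρ : Matrix (a × b) (a × b) ℂ) : (ptraceA ρ).trace = ρ.trace := by
  simp only [Matrix.trace, Matrix.diag, ptraceA, Matrix.of_apply, Fintype.sum_prod_type]
  exact Finset.sum_comm

lemma trace_mul_kron_one (ρ : Matrix (a × b) (a × b) ℂ) (M : Matrix b b ℂ) :
    (ρ * ((1 : Matrix a a ℂ) ⊗ₖ M)).trace = ((ptraceA ρ) * M).trace := by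
  have L : (ρ * ((1 : Matrix a a ℂ) ⊗ₖ M)).trace
      = ∑ i : a, ∑ k : b, ∑ l : b, ρ (i, k) (i, l) * M l k := by
    simp only [Matrix.trace, Matrix.diag, Matrix.mul_apply, Matrix.kroneckerMap_apply,
      Matrix.one_apply, Fintype.sum_prod_type, ite_mul, one_mul, zero_mul, mul_ite, mul_zero]
    refine Finset.sum_congr rfl fun i _ => Finset.sum_congr rfl fun k _ => ?_
    rw [Finset.sum_comm]
    refine Finset.sum_congr rfl fun l _ => ?_
    rw [Finset.sum_ite_eq' Finset.univ i fun x => ρ (i, k) (x, l) * M l k]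
    simp
  have R : ((ptraceA ρ) * M).trace
      = ∑ k : b, ∑ l : b, ∑ i : a, ρ (i, k) (i, l) * M l k := by
    simp only [Matrix.trace, Matrix.diag, Matrix.mul_apply, ptraceA, Matrix.of_apply,
      Finset.sum_mul]
  rw [L, R]
  rw [Finset.sum_comm]
  exact Finset.sum_congr rfl fun k _ => Finset.sum_comm

end Kron

end GentleAux

open GentleAux

/-- Gentle conjugation lemma. -/
theorem gentle_conjugation
    {A B : Type*} [Fintype A] [DecidableEq A] [Fintype B] [DecidableEq B]
    (ρAB : Matrix (A × B) (A × B) ℂ) (hρ : IsDensity ρAB)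
    (σB ΔB : Matrix B B ℂ) (hσ : σB.PosSemidef) (hΔ : ΔB.PosSemidef)
    (hσtr : (σB.trace).re ≤ 1) (hΔtr : (ΔB.trace).re ≤ 1)
    (hle : (σB + ΔB - ptraceA ρAB).PosSemidef) (hpd : (σB + ΔB).PosDef)
    (G : Matrix B B ℂ) (hG : G = msqrt σB * (msqrt (σB + ΔB))⁻¹) :
    traceNorm (ρAB - ((1 : Matrix A A ℂ) ⊗ₖ G) * ρAB * ((1 : Matrix A A ℂ) ⊗ₖ G)ᴴ) ≤
      2 * Real.sqrt (2 * (ΔB.trace).re) := by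

  obtain ⟨hρpsd, hρtr⟩ := hρ
  have hσΔ : (σB + ΔB).PosSemidef := hσ.add hΔ
  set Q : Matrix B B ℂ := hσ.sqrt with hQdef
  set S : Matrix B B ℂ := hσΔ.sqrt with hSdef
  have hGdef : G = Q * S⁻¹ := by rw [hG, msqrt_eq hσ, msqrt_eq hσΔ]
  have hQpsd : Q.PosSemidef := hσ.posSemidef_sqrt
  have hSpsd : S.PosSemidef := hσΔ.posSemidef_sqrt
  have hQh : Qᴴ = Q := hQpsd.1
  have hSh : Sᴴ = S := hSpsd.1
  have hQQ : Q * Q = σB := hσ.sqrt_mul_self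
  have hSS : S * S = σB + ΔB := hσΔ.sqrt_mul_self
  have hdS : IsUnit S.det := by
    have h1 : S.det * S.det = (σB + ΔB).det := by rw [← Matrix.det_mul, hSS]
    have h2 : (σB + ΔB).det ≠ 0 := hpd.det_pos.ne'
    exact isUnit_iff_ne_zero.mpr fun h => h2 (by rw [← h1, h, mul_zero])
  have hinv1 : S⁻¹ * S = 1 := Matrix.nonsing_inv_mul S hdS
  have hinv2 : S * S⁻¹ = 1 := Matrix.mul_nonsing_inv S hdS
  have hSinvh : (S⁻¹)ᴴ = S⁻¹ := by rw [Matrix.conjTranspose_nonsing_inv, hSh]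
  have hGH : Gᴴ = S⁻¹ * Q := by rw [hGdef, Matrix.conjTranspose_mul, hSinvh, hQh]
  have hSSinv : S⁻¹ * (S * S) * S⁻¹ = 1 := by
    rw [← Matrix.mul_assoc, hinv1, Matrix.one_mul, hinv2]
  have hGG : Gᴴ * G = S⁻¹ * σB * S⁻¹ := by
    rw [hGH, hGdef, ← hQQ]
    simp only [Matrix.mul_assoc]
  set N : Matrix B B ℂ := (1 : Matrix B B ℂ) - Gᴴ * G with hNdef
  have hNps : N.PosSemidef := by
    have h1 : (S⁻¹)ᴴ * (S * S - σB) * S⁻¹ = N := by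
      rw [hSinvh, Matrix.mul_sub, Matrix.sub_mul, hSSinv, hNdef, hGG, Matrix.mul_assoc]
    have h2 : (S * S - σB).PosSemidef := by
      have : S * S - σB = ΔB := by rw [hSS]; abel
      rw [this]; exact hΔ
    rw [← h1]
    exact h2.conjTranspose_mul_mul_same _
  set ρB : Matrix B B ℂ := ptraceA ρAB with hρBdef
  -- t2 : Tr(ρB * N) ≤ Tr Δ
  have t2 : ((ρB * N).trace).re ≤ ΔB.trace.re := by
    have hm := trace_mul_mono hle hNps
    have he : ((σB + ΔB) * N).trace = ΔB.trace := by
      have e0 : (σB + ΔB) * N = (σB + ΔB) - S * (σB * S⁻¹) := by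
        rw [hNdef, Matrix.mul_sub, Matrix.mul_one, hGG, ← hSS]
        refine congrArg (S * S - ·) ?_
        simp only [Matrix.mul_assoc]
        rw [← Matrix.mul_assoc S S⁻¹, hinv2, Matrix.one_mul]
      rw [e0, Matrix.trace_sub, Matrix.trace_mul_comm, Matrix.mul_assoc, hinv1,
        Matrix.mul_one, Matrix.trace_add]
      ring
    rw [he] at hm
    exact hm
  -- monotone sqrt : Q ≤ S
  have hmonoQS : (S - Q).PosSemidef := by
    refine sqrt_mono hσ hσΔ ?_
    have : σB + ΔB - σB = ΔB := by abel
    rw [this]; exact hΔ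
  have hQS : σB.trace.re ≤ ((Q * S).trace).re := by
    have h0 := trace_mul_psd_re_nonneg hQpsd hmonoQS
    have h1 : Q * (S - Q) = Q * S - σB := by rw [Matrix.mul_sub, hQQ]
    rw [h1, Matrix.trace_sub, Complex.sub_re] at h0
    linarith
  set E : Matrix B B ℂ := (1 : Matrix B B ℂ) - G with hEdef
  have hEH : Eᴴ = (1 : Matrix B B ℂ) - Gᴴ := by
    rw [hEdef, Matrix.conjTranspose_sub, Matrix.conjTranspose_one]
  -- t1 : Tr(ρB * EᴴE) ≤ Tr Δ
  have t1 : ((ρB * (Eᴴ * E)).trace).re ≤ ΔB.trace.re := by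
    have hcyc : (ρB * (Eᴴ * E)).trace = (E * ρB * Eᴴ).trace := by
      rw [← Matrix.mul_assoc, Matrix.trace_mul_cycle]
    have hmono2 : ((E * ρB * Eᴴ).trace).re ≤ ((E * (σB + ΔB) * Eᴴ).trace).re := by
      have h0 := trace_re_nonneg (hle.mul_mul_conjTranspose_same E)
      have heq : E * (σB + ΔB) * Eᴴ - E * ρB * Eᴴ = E * (σB + ΔB - ρB) * Eᴴ := by
        noncomm_ring
      rw [← heq, Matrix.trace_sub, Complex.sub_re] at h0
      linarith
    have hval : (E * (σB + ΔB) * Eᴴ).trace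
        = (σB + ΔB).trace + σB.trace - (Q * S).trace - (Q * S).trace := by
      have eGSS : G * (S * S) = Q * S := by
        rw [hGdef, Matrix.mul_assoc, ← Matrix.mul_assoc S⁻¹ S S, hinv1, Matrix.one_mul]
      have eSSG : (S * S) * Gᴴ = S * Q := by
        rw [hGH, ← Matrix.mul_assoc, Matrix.mul_assoc S S S⁻¹, hinv2, Matrix.mul_one]
      have eGSSG : G * (S * S) * Gᴴ = σB := by
        rw [eGSS, hGH, Matrix.mul_assoc, ← Matrix.mul_assoc S S⁻¹ Q, hinv2, Matrix.one_mul, hQQ]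
      have expand : E * (S * S) * Eᴴ
          = S * S - G * (S * S) - ((S * S) * Gᴴ - G * (S * S) * Gᴴ) := by
        rw [hEdef, hEH]
        noncomm_ring
      rw [← hSS, expand, eGSSG, eGSS, eSSG]
      rw [Matrix.trace_sub, Matrix.trace_sub, Matrix.trace_sub, hSS, Matrix.trace_mul_comm S Q]
      ring
    have htr_add : (σB + ΔB).trace = σB.trace + ΔB.trace := Matrix.trace_add _ _
    rw [hcyc]
    rw [hval, htr_add] at hmono2
    simp only [Complex.sub_re, Complex.add_re] at hmono2
    linarith
  -- AB level
  set K : Matrix (A × B) (A × B) ℂ := (1 : Matrix A A ℂ) ⊗ₖ G with hKdef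
  have hKH : Kᴴ = (1 : Matrix A A ℂ) ⊗ₖ Gᴴ := by
    rw [hKdef, kron_conjT, Matrix.conjTranspose_one]
  have hKK : Kᴴ * K = (1 : Matrix A A ℂ) ⊗ₖ (Gᴴ * G) := by
    rw [hKH, hKdef, ← Matrix.mul_kronecker_mul, Matrix.one_mul]
  have hNK : (1 : Matrix (A × B) (A × B) ℂ) - Kᴴ * K = (1 : Matrix A A ℂ) ⊗ₖ N := by
    rw [hKK, hNdef, one_kron_sub, Matrix.one_kronecker_one]
  have hNKps : ((1 : Matrix (A × B) (A × B) ℂ) - Kᴴ * K).PosSemidef := by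
    rw [hNK]; exact kron_one_psd hNps
  -- trace translations
  have trK : (ρAB * K).trace = (ρB * G).trace := trace_mul_kron_one ρAB G
  have trKH : (ρAB * Kᴴ).trace = (ρB * Gᴴ).trace := by
    rw [hKH]; exact trace_mul_kron_one ρAB Gᴴ
  have trKK : (ρAB * (Kᴴ * K)).trace = (ρB * (Gᴴ * G)).trace := by
    rw [hKK]; exact trace_mul_kron_one ρAB (Gᴴ * G)
  have trI : ρAB.trace = ρB.trace := (trace_ptraceA ρAB).symm
  -- expansion identities
  have exK : ((1 : Matrix (A × B) (A × B) ℂ) - Kᴴ) * (1 - K)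
      = 1 - K - Kᴴ + Kᴴ * K := by noncomm_ring
  have exG : Eᴴ * E = 1 - G - Gᴴ + Gᴴ * G := by rw [hEH, hEdef]; noncomm_ring
  have cplx : (ρAB * (((1 : Matrix (A × B) (A × B) ℂ) - Kᴴ) * (1 - K))).trace
      + (ρAB * ((1 : Matrix (A × B) (A × B) ℂ) - Kᴴ * K)).trace
      = (ρB * (Eᴴ * E)).trace + (ρB * N).trace := by
    rw [exK, exG, hNdef]
    simp only [Matrix.mul_add, Matrix.mul_sub, Matrix.mul_one, Matrix.trace_add,
      Matrix.trace_sub]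
    rw [trK, trKH, trKK, trI]
  have x0 : 0 ≤ ((ρAB * ((1 : Matrix (A × B) (A × B) ℂ) - Kᴴ * K)).trace).re :=
    trace_mul_psd_re_nonneg hρpsd hNKps
  set c : ℝ := ((ρAB * (((1 : Matrix (A × B) (A × B) ℂ) - Kᴴ) * (1 - K))).trace).re with hcdef
  have cABre : c ≤ 2 * ΔB.trace.re := by
    have := congrArg Complex.re cplx
    simp only [Complex.add_re] at this
    rw [hcdef]
    linarith
  -- sqrt of ρ
  set R : Matrix (A × B) (A × B) ℂ := hρpsd.sqrt with hRdef
  have hRps : R.PosSemidef := hρpsd.posSemidef_sqrt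
  have hRh : Rᴴ = R := hRps.1
  have hRR : R * R = ρAB := hρpsd.sqrt_mul_self
  set X₁ : Matrix (A × B) (A × B) ℂ := ((1 : Matrix (A × B) (A × B) ℂ) - K) * R with hX₁
  set X₂ : Matrix (A × B) (A × B) ℂ := K * R with hX₂
  set Y₂ : Matrix (A × B) (A × B) ℂ := R * ((1 : Matrix (A × B) (A × B) ℂ) - Kᴴ) with hY₂
  have hsplit : ρAB - K * ρAB * Kᴴ = X₁ * R + X₂ * Y₂ := by
    rw [hX₁, hX₂, hY₂, ← hRR]
    noncomm_ring
  -- l2 computations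
  have cycR : ∀ M : Matrix (A × B) (A × B) ℂ, (R * M * R).trace = (ρAB * M).trace := by
    intro M
    rw [Matrix.trace_mul_cycle, hRR]
  have l2X₁ : l2sq X₁ = c := by
    have hX₁H : X₁ᴴ = R * ((1 : Matrix (A × B) (A × B) ℂ) - Kᴴ) := by
      rw [hX₁, Matrix.conjTranspose_mul, hRh, Matrix.conjTranspose_sub,
        Matrix.conjTranspose_one]
    have e1 : X₁ᴴ * X₁
        = R * ((((1 : Matrix (A × B) (A × B) ℂ) - Kᴴ) * ((1 : Matrix (A × B) (A × B) ℂ) - K))) * R := by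
      rw [hX₁H, hX₁]; noncomm_ring
    rw [l2sq, e1, cycR, hcdef]
  have l2Y₂ : l2sq Y₂ = c := by
    have hY₂H : Y₂ᴴ = ((1 : Matrix (A × B) (A × B) ℂ) - K) * R := by
      rw [hY₂, Matrix.conjTranspose_mul, hRh, Matrix.conjTranspose_sub,
        Matrix.conjTranspose_one, Matrix.conjTranspose_conjTranspose]
    have e2 : Y₂ᴴ * Y₂
        = ((1 : Matrix (A × B) (A × B) ℂ) - K) * (ρAB * ((1 : Matrix (A × B) (A × B) ℂ) - Kᴴ)) := by
      rw [hY₂H, hY₂, ← hRR]; noncomm_ring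
    rw [l2sq, e2, Matrix.trace_mul_comm, Matrix.mul_assoc, hcdef]
  have l2R : l2sq R = 1 := by
    rw [l2sq, hRh, hRR, hρtr, Complex.one_re]
  have l2X₂ : l2sq X₂ ≤ 1 := by
    have hX₂H : X₂ᴴ = R * Kᴴ := by rw [hX₂, Matrix.conjTranspose_mul, hRh]
    have e3 : X₂ᴴ * X₂ = R * (Kᴴ * K) * R := by rw [hX₂H, hX₂]; noncomm_ring
    rw [l2sq, e3, cycR]
    have h0 := x0
    rw [Matrix.mul_sub, Matrix.mul_one, Matrix.trace_sub, Complex.sub_re] at h0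
    have h1 : ρAB.trace.re = 1 := by rw [hρtr, Complex.one_re]
    linarith
  have hc0 : 0 ≤ c := by rw [← l2X₁]; exact l2sq_nonneg X₁
  -- final assembly
  have main : traceNorm (ρAB - K * ρAB * Kᴴ) ≤ 2 * Real.sqrt c := by
    rw [hsplit]
    have h1 := traceNorm_add_le (X₁ * R) (X₂ * Y₂)
    have h2 := traceNorm_mul_le X₁ R
    have h3 := traceNorm_mul_le X₂ Y₂
    rw [l2X₁, l2R, Real.sqrt_one, mul_one] at h2
    rw [l2Y₂] at h3
    have h4 : Real.sqrt (l2sq X₂) ≤ 1 := by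
      rw [show (1:ℝ) = Real.sqrt 1 by rw [Real.sqrt_one]]
      exact Real.sqrt_le_sqrt l2X₂
    have h5 : Real.sqrt (l2sq X₂) * Real.sqrt c ≤ 1 * Real.sqrt c :=
      mul_le_mul_of_nonneg_right h4 (Real.sqrt_nonneg _)
    rw [one_mul] at h5
    linarith
  have hfin : Real.sqrt c ≤ Real.sqrt (2 * ΔB.trace.re) := Real.sqrt_le_sqrt cABre
  calc traceNorm (ρAB - K * ρAB * Kᴴ) ≤ 2 * Real.sqrt c := main
    _ ≤ 2 * Real.sqrt (2 * ΔB.trace.re) := by linarith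

end
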